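/- Let n ≥ 2 be an integer and ε ∈ (0,1). Let (K,d) be the uniform metric on a set K of n points, in which d(x,y) = 2 for all x ≠ y. Then every non-Steiner tree cover of (K,d) with stretch 2−ε has size at least n/2. -/
import Mathlib


open scoped ENNReal

/-- The total length of a walk with respect to an edge-length function. -/
noncomputable def walkLen {V : Type*} {G : SimpleGraph V} {x y : V}
    (len : V → V → ℝ≥0∞) (p : G.Walk x y) : ℝ≥0∞ :=
  (p.darts.map (fun d => len d.toProd.1 d.toProd.2)).sum

/-- Walk-distance in a graph with edge lengths: the infimum over walks of the total
length (`∞` if no walk exists). -/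
noncomputable def gdist {V : Type*} (G : SimpleGraph V) (len : V → V → ℝ≥0∞)
    (x y : V) : ℝ≥0∞ :=
  ⨅ p : G.Walk x y, walkLen len p

/-- A weighted tree: a connected acyclic simple graph together with positive
(finite) real lengths on its edges. -/
structure WeightedTree (V : Type*) where
  graph : SimpleGraph V
  isTree : graph.IsTree
  len : V → V → ℝ≥0∞
  len_symm : ∀ x y, len x y = len y x
  len_pos : ∀ ⦃x y⦄, graph.Adj x y → 0 < len x y
  len_ne_top : ∀ ⦃x y⦄, graph.Adj x y → len x y ≠ ⊤

/-- The tree metric of a weighted tree. -/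
noncomputable def WeightedTree.dist {V : Type*} (T : WeightedTree V) (x y : V) : ℝ≥0∞ :=
  gdist T.graph T.len x y

/-- A non-Steiner tree cover of `(K, d)` with stretch `α`: a list of dominating
trees on `K` such that each pair has its distance preserved within factor `α`
in at least one of the trees. -/
def IsNonSteinerTreeCover {K : Type*} (d : K → K → ℝ) (α : ℝ)
    (Ts : List (WeightedTree K)) : Prop :=
  (∀ T ∈ Ts, ∀ x y : K, ENNReal.ofReal (d x y) ≤ T.dist x y) ∧
  (∀ x y : K, ∃ T ∈ Ts, T.dist x y ≤ ENNReal.ofReal (α * d x y))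

/-- For `n ≥ 2` and `ε ∈ (0,1)`, every non-Steiner tree cover
with stretch `2 − ε` of the uniform metric (all pairwise distances `2`) on a set
of `n` points has size at least `n/2`. -/
theorem nonSteiner_tree_cover_stretch_below_two_lower_bound
    (n : ℕ) (hn : 2 ≤ n) (ε : ℝ) (hε : ε ∈ Set.Ioo (0 : ℝ) 1)
    (K : Type) [Fintype K] [DecidableEq K] (hcard : Fintype.card K = n)
    (d : K → K → ℝ) (hd : ∀ x y : K, d x y = if x = y then 0 else 2)
    (Ts : List (WeightedTree K)) (hTs : IsNonSteinerTreeCover d (2 - ε) Ts) :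
    (n : ℝ) / 2 ≤ (Ts.length : ℝ) := by
  classical
  obtain ⟨hdom, hcov⟩ := hTs
  -- Step 1: each pair of distinct points is adjacent in some tree of the cover
  have key : ∀ x y : K, x ≠ y → ∃ T ∈ Ts, T.graph.Adj x y := by
    intro x y hxy
    obtain ⟨T, hT, hle⟩ := hcov x y
    refine ⟨T, hT, ?_⟩
    -- every edge of T has length at least 2
    have hlen : ∀ a b : K, T.graph.Adj a b → (2 : ℝ≥0∞) ≤ T.len a b := by
      intro a b hab
      have h1 : ENNReal.ofReal (d a b) ≤ T.dist a b := hdom T hT a b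
      have hdab : d a b = 2 := by rw [hd]; simp [hab.ne]
      have h2 : T.dist a b ≤ T.len a b := by
        refine iInf_le_of_le (SimpleGraph.Walk.cons hab SimpleGraph.Walk.nil) ?_
        simp [walkLen]
      have : (2 : ℝ≥0∞) = ENNReal.ofReal (d a b) := by
        rw [hdab]; simp [ENNReal.ofReal_ofNat]
      rw [this]; exact h1.trans h2
    have hd2 : d x y = 2 := by rw [hd]; simp [hxy]
    have hlt : T.dist x y < 4 := by
      refine lt_of_le_of_lt hle ?_
      rw [hd2]
      have h4 : (4 : ℝ≥0∞) = ENNReal.ofReal 4 := by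
        simp [ENNReal.ofReal_ofNat]
      rw [h4]
      exact ENNReal.ofReal_lt_ofReal_iff (by norm_num) |>.mpr (by nlinarith [hε.1])
    obtain ⟨p, hp⟩ := iInf_lt_iff.mp hlt
    have hsum : (p.length) • (2 : ℝ≥0∞) ≤ walkLen T.len p := by
      have := List.card_nsmul_le_sum
        (p.darts.map (fun dd => T.len dd.toProd.1 dd.toProd.2)) (2 : ℝ≥0∞) ?_
      · simpa [walkLen, SimpleGraph.Walk.length_darts] using this
      · intro q hq
        obtain ⟨dd, _, rfl⟩ := List.mem_map.mp hq
        exact hlen _ _ dd.adj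
    have hl1 : p.length ≤ 1 := by
      by_contra h
      push_neg at h
      have h2 : (4 : ℝ≥0∞) ≤ (p.length) • (2 : ℝ≥0∞) := by
        rw [nsmul_eq_mul]
        have hp2 : (2 : ℝ≥0∞) ≤ (p.length : ℝ≥0∞) := by exact_mod_cast h
        calc (4 : ℝ≥0∞) = 2 * 2 := by norm_num
          _ ≤ ↑p.length * 2 := mul_le_mul_left hp2 2
      exact absurd hp (not_lt.mpr (h2.trans hsum))
    have hl0 : p.length ≠ 0 := fun h0 =>
      hxy (SimpleGraph.Walk.eq_of_length_eq_zero h0)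
    exact SimpleGraph.Walk.adj_of_length_eq_one (p := p) (by omega)
  -- Step 2: counting
  have hedges : ∀ T ∈ Ts, (T.graph.edgeFinset).card ≤ n - 1 := by
    intro T hT
    have h := T.isTree.card_edgeFinset
    rw [hcard] at h
    omega
  set B : Finset (Sym2 K) := Ts.toFinset.biUnion (fun T => T.graph.edgeFinset) with hB
  have hBcard : B.card ≤ Ts.length * (n - 1) := by
    calc B.card ≤ ∑ T ∈ Ts.toFinset, (T.graph.edgeFinset).card :=
          Finset.card_biUnion_le
      _ ≤ Ts.toFinset.card • (n - 1) :=
          Finset.sum_le_card_nsmul _ _ _ (fun T hT => hedges T (List.mem_toFinset.mp hT))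
      _ ≤ Ts.length * (n - 1) := by
          simpa [smul_eq_mul] using Nat.mul_le_mul_right (n - 1) (List.toFinset_card_le Ts)
  have hsub : (Finset.univ.filter fun e : Sym2 K => ¬ e.IsDiag) ⊆ B := by
    intro e he
    rw [Finset.mem_filter] at he
    induction e with
    | _ x y =>
      have hxy : x ≠ y := by simpa [Sym2.mk_isDiag_iff] using he.2
      obtain ⟨T, hT, hadj⟩ := key x y hxy
      exact Finset.mem_biUnion.mpr ⟨T, List.mem_toFinset.mpr hT,
        SimpleGraph.mem_edgeFinset.mpr ((T.graph.mem_edgeSet).mpr hadj)⟩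
  have hcount : n.choose 2 ≤ Ts.length * (n - 1) := by
    have h1 : (Finset.univ.filter fun e : Sym2 K => ¬ e.IsDiag).card = n.choose 2 := by
      rw [← hcard, ← Sym2.card_subtype_not_diag]
      exact (Fintype.card_subtype _).symm
    calc n.choose 2 = _ := h1.symm
      _ ≤ B.card := Finset.card_le_card hsub
      _ ≤ Ts.length * (n - 1) := hBcard
  -- Step 3: arithmetic
  have hcast : ((n.choose 2 : ℕ) : ℝ) ≤ ((Ts.length * (n - 1) : ℕ) : ℝ) :=
    Nat.cast_le.mpr hcount
  rw [Nat.cast_choose_two] at hcast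
  have hn1 : ((n - 1 : ℕ) : ℝ) = (n : ℝ) - 1 := by
    push_cast [Nat.cast_sub (by omega : 1 ≤ n)]; ring
  rw [Nat.cast_mul, hn1] at hcast
  have hnR : (2 : ℝ) ≤ n := by exact_mod_cast hn
  nlinarith [hcast, hnR]
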